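/- Let n ≥ 1, let Σ be a symmetric positive definite n × n real matrix with smallest eigenvalue λ_min > 0 and largest eigenvalue λ_max, let μ ∈ ℝⁿ, and on the standard simplex Sⁿ = {θ ∈ ℝⁿ : θᵢ ≥ 0, Σᵢθᵢ = 1} define β(φ) = min_{θ ∈ Sⁿ} { −μᵀθ + (φ/2) θᵀΣθ }. Then for all φ₁ ≤ φ₂, (λ_min/(2n)) (φ₂ − φ₁) ≤ β(φ₂) − β(φ₁) ≤ (λ_max/2) (φ₂ − φ₁). In particular β is Lipschitz continuous and strictly increasing, and wherever β is differentiable its derivative satisfies λ_min/(2n) ≤ β′(φ) ≤ λ_max/2. -/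

import Mathlib

open Matrix Topology
open scoped NNReal

lemma rayleighAux {n : ℕ} {Sig : Matrix (Fin n) (Fin n) ℝ} (hpd : Sig.PosDef)
    {lmin lmax : ℝ}
    (hlmin : IsLeast (Set.range hpd.1.eigenvalues) lmin)
    (hlmax : IsGreatest (Set.range hpd.1.eigenvalues) lmax)
    (θ : Fin n → ℝ) :
    lmin * (θ ⬝ᵥ θ) ≤ θ ⬝ᵥ Sig.mulVec θ ∧ θ ⬝ᵥ Sig.mulVec θ ≤ lmax * (θ ⬝ᵥ θ) := by
  classical
  set hA := hpd.1 with hAdef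
  set U : Matrix (Fin n) (Fin n) ℝ := (hA.eigenvectorUnitary : Matrix (Fin n) (Fin n) ℝ) with hU
  set y : Fin n → ℝ := star U *ᵥ θ with hy
  have hUU : U * star U = 1 := (Matrix.mem_unitaryGroup_iff).mp hA.eigenvectorUnitary.2
  have hq : θ ⬝ᵥ Sig.mulVec θ = ∑ i, hA.eigenvalues i * (y i)^2 := by
    conv_lhs => rw [hA.spectral_theorem, Unitary.conjStarAlgAut_apply]
    rw [← Matrix.mulVec_mulVec, ← Matrix.mulVec_mulVec, dotProduct_mulVec]
    have hvm : θ ᵥ* U = y := by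
      rw [hy, ← Matrix.mulVec_transpose, Matrix.star_eq_conjTranspose, conjTranspose_eq_transpose_of_trivial]
    rw [hvm]
    simp [dotProduct, Matrix.mulVec_diagonal, sq, mul_comm, mul_assoc, mul_left_comm]
    rfl
  have hn : θ ⬝ᵥ θ = ∑ i, (y i)^2 := by
    have : y ⬝ᵥ y = θ ⬝ᵥ θ := by
      rw [hy, dotProduct_mulVec, ← Matrix.mulVec_transpose]
      rw [show (star U)ᵀ = U by
        rw [Matrix.star_eq_conjTranspose, conjTranspose_eq_transpose_of_trivial,
          Matrix.transpose_transpose]]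
      rw [Matrix.mulVec_mulVec, hUU, Matrix.one_mulVec]
    rw [← this]
    simp [dotProduct, sq]
  constructor
  · rw [hq, hn, Finset.mul_sum]
    refine Finset.sum_le_sum fun i _ => ?_
    exact mul_le_mul_of_nonneg_right (hlmin.2 ⟨i, rfl⟩) (sq_nonneg _)
  · rw [hq, hn, Finset.mul_sum]
    refine Finset.sum_le_sum fun i _ => ?_
    exact mul_le_mul_of_nonneg_right (hlmax.2 ⟨i, rfl⟩) (sq_nonneg _)

theorem betaHJB_increment_bounds
    (n : ℕ) (hn : 1 ≤ n)
    (Sig : Matrix (Fin n) (Fin n) ℝ) (hsymm : Sig.IsSymm) (hpd : Sig.PosDef)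
    (lmin lmax : ℝ)
    (hlmin : IsLeast (Set.range hpd.1.eigenvalues) lmin)
    (hlmax : IsGreatest (Set.range hpd.1.eigenvalues) lmax)
    (hlminpos : 0 < lmin)
    (μ : Fin n → ℝ)
    (β : ℝ → ℝ)
    (hβ : ∀ φ : ℝ, β φ =
      sInf ((fun θ : Fin n → ℝ => -(μ ⬝ᵥ θ) + (φ / 2) * (θ ⬝ᵥ Sig.mulVec θ)) ''
        stdSimplex ℝ (Fin n))) :
    (∀ φ₁ φ₂ : ℝ, φ₁ ≤ φ₂ →
      lmin / (2 * n) * (φ₂ - φ₁) ≤ β φ₂ - β φ₁ ∧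
      β φ₂ - β φ₁ ≤ lmax / 2 * (φ₂ - φ₁)) ∧
    LipschitzWith (Real.toNNReal (lmax / 2)) β ∧
    StrictMono β ∧
    (∀ φ : ℝ, DifferentiableAt ℝ β φ →
      lmin / (2 * n) ≤ deriv β φ ∧ deriv β φ ≤ lmax / 2) := by
  classical
  have hnpos : (0 : ℝ) < n := by exact_mod_cast hn
  set c : ℝ := lmin / (2 * n) with hcdef
  set C : ℝ := lmax / 2 with hCdef
  have hlle : lmin ≤ lmax := hlmax.2 hlmin.1
  have hlmaxpos : 0 < lmax := lt_of_lt_of_le hlminpos hlle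
  have hc : 0 < c := div_pos hlminpos (by linarith)
  have hC : 0 < C := by positivity
  set f : ℝ → (Fin n → ℝ) → ℝ :=
    fun φ θ => -(μ ⬝ᵥ θ) + (φ / 2) * (θ ⬝ᵥ Sig.mulVec θ) with hfdef
  -- quadratic form bounds on the simplex
  have hquad : ∀ θ ∈ stdSimplex ℝ (Fin n),
      lmin / n ≤ θ ⬝ᵥ Sig.mulVec θ ∧ θ ⬝ᵥ Sig.mulVec θ ≤ lmax := by
    intro θ hθ
    obtain ⟨hθ0, hθ1⟩ := hθ
    have hdot : θ ⬝ᵥ θ = ∑ i, θ i ^ 2 := by simp [dotProduct, sq]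
    have hlow : 1 / (n : ℝ) ≤ θ ⬝ᵥ θ := by
      have h := sq_sum_le_card_mul_sum_sq (s := Finset.univ) (f := θ)
      rw [hθ1] at h
      simp only [Finset.card_univ, Fintype.card_fin, one_pow] at h
      rw [hdot, div_le_iff₀ hnpos, mul_comm]
      exact_mod_cast h
    have hhigh : θ ⬝ᵥ θ ≤ 1 := by
      have h := Finset.sum_sq_le_sq_sum_of_nonneg (s := Finset.univ) (f := θ)
        (fun i _ => hθ0 i)
      rw [hθ1, one_pow] at h
      rw [hdot]; exact h
    obtain ⟨h1, h2⟩ := rayleighAux hpd hlmin hlmax θ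
    constructor
    · calc lmin / n = lmin * (1 / n) := by ring
        _ ≤ lmin * (θ ⬝ᵥ θ) := by
            exact mul_le_mul_of_nonneg_left hlow hlminpos.le
        _ ≤ θ ⬝ᵥ Sig.mulVec θ := h1
    · calc θ ⬝ᵥ Sig.mulVec θ ≤ lmax * (θ ⬝ᵥ θ) := h2
        _ ≤ lmax * 1 := mul_le_mul_of_nonneg_left hhigh hlmaxpos.le
        _ = lmax := mul_one _
  -- existence of minimizers
  haveI : Nonempty (Fin n) := ⟨⟨0, hn⟩⟩
  have hcont : ∀ φ : ℝ, Continuous (f φ) := by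
    intro φ
    simp only [hfdef, dotProduct, Matrix.mulVec]
    fun_prop
  have hmin : ∀ φ : ℝ, ∃ θ ∈ stdSimplex ℝ (Fin n),
      β φ = f φ θ ∧ ∀ θ' ∈ stdSimplex ℝ (Fin n), f φ θ ≤ f φ θ' := by
    intro φ
    have hne : (stdSimplex ℝ (Fin n)).Nonempty :=
      ⟨Pi.single (⟨0, hn⟩ : Fin n) 1, single_mem_stdSimplex ℝ _⟩
    obtain ⟨θ, hθS, hθmin⟩ := (isCompact_stdSimplex ℝ (Fin n)).exists_isMinOn
      hne (hcont φ).continuousOn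
    refine ⟨θ, hθS, ?_, fun θ' hθ' => hθmin hθ'⟩
    rw [hβ φ]
    refine IsLeast.csInf_eq ⟨⟨θ, hθS, rfl⟩, ?_⟩
    rintro x ⟨θ', hθ', rfl⟩
    exact hθmin hθ'
  -- key increment bounds
  have key : ∀ φ₁ φ₂ : ℝ, φ₁ ≤ φ₂ →
      c * (φ₂ - φ₁) ≤ β φ₂ - β φ₁ ∧ β φ₂ - β φ₁ ≤ C * (φ₂ - φ₁) := by
    intro φ₁ φ₂ h12
    obtain ⟨θ₁, hθ₁S, hβ₁, hmin₁⟩ := hmin φ₁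
    obtain ⟨θ₂, hθ₂S, hβ₂, hmin₂⟩ := hmin φ₂
    obtain ⟨hq₁l, hq₁u⟩ := hquad θ₁ hθ₁S
    obtain ⟨hq₂l, hq₂u⟩ := hquad θ₂ hθ₂S
    have hd2 : (0:ℝ) ≤ (φ₂ - φ₁) / 2 := by linarith
    constructor
    · -- lower bound
      have h1 : β φ₁ ≤ f φ₁ θ₂ := hβ₁ ▸ hmin₁ θ₂ hθ₂S
      have h2 : f φ₂ θ₂ - f φ₁ θ₂ = (φ₂ - φ₁) / 2 * (θ₂ ⬝ᵥ Sig.mulVec θ₂) := by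
        simp only [hfdef]; ring
      have h3 : (φ₂ - φ₁) / 2 * (lmin / n) ≤ (φ₂ - φ₁) / 2 * (θ₂ ⬝ᵥ Sig.mulVec θ₂) :=
        mul_le_mul_of_nonneg_left hq₂l hd2
      have h4 : c * (φ₂ - φ₁) = (φ₂ - φ₁) / 2 * (lmin / n) := by
        rw [hcdef]; field_simp
      calc c * (φ₂ - φ₁) = (φ₂ - φ₁) / 2 * (lmin / n) := h4
        _ ≤ (φ₂ - φ₁) / 2 * (θ₂ ⬝ᵥ Sig.mulVec θ₂) := h3
        _ = f φ₂ θ₂ - f φ₁ θ₂ := h2.symm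
        _ ≤ β φ₂ - β φ₁ := by rw [hβ₂]; linarith
    · -- upper bound
      have h1 : β φ₂ ≤ f φ₂ θ₁ := hβ₂ ▸ hmin₂ θ₁ hθ₁S
      have h2 : f φ₂ θ₁ - f φ₁ θ₁ = (φ₂ - φ₁) / 2 * (θ₁ ⬝ᵥ Sig.mulVec θ₁) := by
        simp only [hfdef]; ring
      have h3 : (φ₂ - φ₁) / 2 * (θ₁ ⬝ᵥ Sig.mulVec θ₁) ≤ (φ₂ - φ₁) / 2 * lmax :=
        mul_le_mul_of_nonneg_left hq₁u hd2
      have h4 : C * (φ₂ - φ₁) = (φ₂ - φ₁) / 2 * lmax := by rw [hCdef]; ring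
      calc β φ₂ - β φ₁ ≤ f φ₂ θ₁ - f φ₁ θ₁ := by rw [hβ₁]; linarith
        _ = (φ₂ - φ₁) / 2 * (θ₁ ⬝ᵥ Sig.mulVec θ₁) := h2
        _ ≤ (φ₂ - φ₁) / 2 * lmax := h3
        _ = C * (φ₂ - φ₁) := h4.symm
  refine ⟨key, ?_, ?_, ?_⟩
  · -- Lipschitz
    refine LipschitzWith.of_dist_le_mul fun x y => ?_
    have hCnn : ((Real.toNNReal (lmax / 2) : ℝ≥0) : ℝ) = C := Real.coe_toNNReal _ hC.le
    rw [Real.dist_eq, Real.dist_eq, hCnn]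
    rcases le_total x y with h | h
    · obtain ⟨h1, h2⟩ := key x y h
      have hc0 : 0 ≤ c * (y - x) := mul_nonneg hc.le (by linarith)
      have hC0 : 0 ≤ C * (y - x) := mul_nonneg hC.le (by linarith)
      have hb : |β x - β y| ≤ C * (y - x) := by
        rw [abs_sub_comm]; exact abs_le.mpr ⟨by linarith, h2⟩
      have hxy : |x - y| = y - x := by
        rw [abs_of_nonpos (by linarith : x - y ≤ 0), neg_sub]
      rw [hxy]; exact hb
    · obtain ⟨h1, h2⟩ := key y x h
      have hc0 : 0 ≤ c * (x - y) := mul_nonneg hc.le (by linarith)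
      have hC0 : 0 ≤ C * (x - y) := mul_nonneg hC.le (by linarith)
      have hb : |β x - β y| ≤ C * (x - y) := abs_le.mpr ⟨by linarith, h2⟩
      have hxy : |x - y| = x - y := abs_of_nonneg (by linarith)
      rw [hxy]; exact hb
  · -- strict mono
    intro a b hab
    have h1 := (key a b hab.le).1
    have h2 : 0 < c * (b - a) := mul_pos hc (by linarith)
    linarith
  · -- derivative bounds
    intro φ hdiff
    have hslope : ∀ x : ℝ, x ≠ φ → c ≤ slope β φ x ∧ slope β φ x ≤ C := by
      intro x hx
      rw [slope_def_field]
      rcases lt_or_gt_of_ne hx with hlt | hgt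
      · obtain ⟨h1, h2⟩ := key x φ hlt.le
        have hneg : x - φ < 0 := by linarith
        have e1 : c * (x - φ) = -(c * (φ - x)) := by ring
        have e2 : C * (x - φ) = -(C * (φ - x)) := by ring
        constructor
        · rw [le_div_iff_of_neg hneg]; linarith
        · rw [div_le_iff_of_neg hneg]; linarith
      · obtain ⟨h1, h2⟩ := key φ x hgt.le
        have hpos : 0 < x - φ := by linarith
        constructor
        · rw [le_div_iff₀ hpos]; linarith
        · rw [div_le_iff₀ hpos]; linarith
    have hd := hdiff.hasDerivAt
    rw [hasDerivAt_iff_tendsto_slope] at hd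
    have hle : 𝓝[>] φ ≤ 𝓝[≠] φ :=
      nhdsWithin_mono φ fun x hx => ne_of_gt hx
    have hd' := hd.mono_left hle
    constructor
    · exact ge_of_tendsto hd' (Filter.eventually_of_mem self_mem_nhdsWithin
        fun x hx => (hslope x (ne_of_gt hx)).1)
    · exact le_of_tendsto hd' (Filter.eventually_of_mem self_mem_nhdsWithin
        fun x hx => (hslope x (ne_of_gt hx)).2)
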